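/- arXiv:1209.4956 — 2 statements merged into one kernel-verified Lean document; each statement's English description precedes it below -/
import Mathlib

section
/- Relation (X4): Let u be a 0-grassmannian affine permutation, let a < b < c < d be integers with b − a ≤ k and d − c ≤ k, and set q = (b − a) + (d − c). Suppose q < n, b ≡ c (mod n), u(b) > 0, and u(a+q) > 0. If the composite u·t_{a,b}·t_{c,d} is defined, then the composite u·t_{d−q,c}·t_{b,a+q} is defined and the two resulting affine permutations are equal. -/
open Function

/-- The affine transposition `t_{a,b}` of period `n`: it exchanges `a + m*n` and
`b + m*n` for every `m : ℤ` and fixes all other integers. -/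
def affT (n a b : ℤ) : ℤ → ℤ := fun i =>
  if (i - a) % n = 0 then i - a + b
  else if (i - b) % n = 0 then i - b + a
  else i

/-- `u` is an affine permutation of period `n`: a bijection of `ℤ` with
`u (i + n) = u i + n` and `∑_{i=1}^{n} u i = n (n+1) / 2`. -/
def IsAffinePerm (n : ℤ) (u : ℤ → ℤ) : Prop :=
  Function.Bijective u ∧ (∀ i : ℤ, u (i + n) = u i + n) ∧
    ∑ i ∈ Finset.Icc (1 : ℤ) n, u i = n * (n + 1) / 2

/-- The operator `t_{a,b}` is defined at `u`:
`u a ≤ 0 < u b` and for every `a < i < b`, either `u i < u a` or `u i > u b`. -/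
def DefinedAt (u : ℤ → ℤ) (a b : ℤ) : Prop :=
  u a ≤ 0 ∧ 0 < u b ∧ ∀ i : ℤ, a < i → i < b → u i < u a ∨ u b < u i

/-- `u` is 0-grassmannian: the positions of the values `1, 2, …, n` under `u`
appear in increasing order, i.e. `u⁻¹ 1 < u⁻¹ 2 < ⋯ < u⁻¹ n`. -/
def IsGrassmannian (n : ℤ) (u : ℤ → ℤ) : Prop :=
  ∀ i j p q : ℤ, 1 ≤ i → i < j → j ≤ n → u p = i → u q = j → p < q

/-- The composite `u · t_{a,b} · t_{c,d}` is defined. -/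
def Def2 (n : ℤ) (u : ℤ → ℤ) (a b c d : ℤ) : Prop :=
  DefinedAt u a b ∧ DefinedAt (u ∘ affT n a b) c d

/-- The composite `u · t_{a₁,b₁} · t_{a₂,b₂} · t_{a₃,b₃}` is defined. -/
def Def3 (n : ℤ) (u : ℤ → ℤ) (a₁ b₁ a₂ b₂ a₃ b₃ : ℤ) : Prop :=
  DefinedAt u a₁ b₁ ∧ DefinedAt (u ∘ affT n a₁ b₁) a₂ b₂ ∧
    DefinedAt ((u ∘ affT n a₁ b₁) ∘ affT n a₂ b₂) a₃ b₃

/-- `affT` is invariant under shifting both endpoints by a multiple of the period. -/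
lemma affT_shift (n a b s : ℤ) : affT n (a + s * n) (b + s * n) = affT n a b := by
  funext i
  simp only [affT]
  have h1 : (i - (a + s * n)) % n = (i - a) % n := by
    have e : i - (a + s * n) = (i - a) + n * (-s) := by ring
    rw [e, Int.add_mul_emod_self_left]
  have h2 : (i - (b + s * n)) % n = (i - b) % n := by
    have e : i - (b + s * n) = (i - b) + n * (-s) := by ring
    rw [e, Int.add_mul_emod_self_left]
  rw [h1, h2]
  split_ifs <;> ring

theorem stmt15 (k : ℤ) (hk : 1 ≤ k) (u : ℤ → ℤ)
    (hu : IsAffinePerm (k + 1) u) (hg : IsGrassmannian (k + 1) u)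
    (a b c d : ℤ) (hab : a < b) (hbc : b < c) (hcd : c < d)
    (hba : b - a ≤ k) (hdc : d - c ≤ k)
    (hq : (b - a) + (d - c) < k + 1)
    (hmod : b % (k + 1) = c % (k + 1))
    (hub : 0 < u b) (huaq : 0 < u (a + ((b - a) + (d - c))))
    (hdef : Def2 (k + 1) u a b c d) :
    Def2 (k + 1) u (d - ((b - a) + (d - c))) c b (a + ((b - a) + (d - c))) ∧
      (u ∘ affT (k + 1) a b) ∘ affT (k + 1) c d =
        (u ∘ affT (k + 1) (d - ((b - a) + (d - c))) c) ∘
          affT (k + 1) b (a + ((b - a) + (d - c))) := by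
  obtain ⟨hbij, hp, hsum⟩ := hu
  set n : ℤ := k + 1 with hn
  set q : ℤ := (b - a) + (d - c) with hqdef
  have hnpos : (0 : ℤ) < n := by omega
  -- c = b + t * n
  have hdvd : n ∣ c - b := by
    apply Int.dvd_of_emod_eq_zero
    rw [Int.sub_emod, hmod, sub_self, Int.zero_emod]
  obtain ⟨t, ht⟩ := hdvd
  have hc : c = b + t * n := by linear_combination ht
  have ht1 : 1 ≤ t := by nlinarith
  have htn : 0 < t * n := mul_pos (by omega) hnpos
  have hd : d = (a + q) + t * n := by linear_combination ht
  -- periodicity for multiples of n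
  have hpm : ∀ (m : ℕ) (i : ℤ), u (i + (m : ℤ) * n) = u i + (m : ℤ) * n := by
    intro m
    induction m with
    | zero => simp
    | succ m ih =>
      intro i
      have e : i + ((m + 1 : ℕ) : ℤ) * n = (i + (m : ℤ) * n) + n := by push_cast; ring
      rw [e, hp, ih]
      push_cast; ring
  have hpt : ∀ i : ℤ, u (i + t * n) = u i + t * n := by
    intro i
    have h0 : ((t.toNat : ℤ)) = t := Int.toNat_of_nonneg (by omega)
    rw [← h0]
    exact hpm t.toNat i
  have hshift : ∀ x : ℤ, (x + t * n) % n = x % n := by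
    intro x
    rw [mul_comm, Int.add_mul_emod_self_left]
  -- basic mod facts
  have hmba : (b - a) % n ≠ 0 := by
    rw [Int.emod_eq_of_lt (by omega) (by omega)]; omega
  have hmdc : (d - c) % n ≠ 0 := by
    rw [Int.emod_eq_of_lt (by omega) (by omega)]; omega
  have hmq : q % n ≠ 0 := by
    rw [Int.emod_eq_of_lt (by omega) (by omega)]; omega
  have hfix : ∀ i : ℤ, (i - a) % n ≠ 0 → (i - b) % n ≠ 0 → affT n a b i = i := by
    intro i h1 h2
    simp only [affT, if_neg h1, if_neg h2]
  have hmod_fix : ∀ j : ℤ, b < j → j < a + q → (j - a) % n ≠ 0 ∧ (j - b) % n ≠ 0 := by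
    intro j h1 h2
    constructor
    · rw [Int.emod_eq_of_lt (by omega) (by omega)]; omega
    · rw [Int.emod_eq_of_lt (by omega) (by omega)]; omega
  have hv_mid : ∀ j : ℤ, b < j → j < a + q → affT n a b j = j := fun j h1 h2 =>
    hfix j (hmod_fix j h1 h2).1 (hmod_fix j h1 h2).2
  have hv_mid' : ∀ i : ℤ, c < i → i < d → affT n a b i = i := by
    intro i h1 h2
    have hb1 : b < i - t * n := by linarith [hc]
    have hb2 : i - t * n < a + q := by linarith [hd]
    obtain ⟨m1, m2⟩ := hmod_fix (i - t * n) hb1 hb2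
    apply hfix
    · have e : i - a = ((i - t * n) - a) + t * n := by ring
      rw [e, hshift]; exact m1
    · have e : i - b = ((i - t * n) - b) + t * n := by ring
      rw [e, hshift]; exact m2
  -- evaluations of affT n a b
  have hEb : affT n a b b = a := by
    simp only [affT, if_neg hmba, sub_self, Int.zero_emod, if_pos rfl]
    simp
  have hEc : affT n a b c = a + t * n := by
    have h1 : (c - a) % n ≠ 0 := by
      have e : c - a = (b - a) + t * n := by linear_combination hc
      rw [e, hshift]; exact hmba
    have h2 : (c - b) % n = 0 := by
      have e : c - b = 0 + t * n := by linear_combination hc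
      rw [e, hshift]; simp
    simp only [affT, if_neg h1, if_pos h2]
    linear_combination hc
  have hEd : affT n a b d = d := by
    apply hfix
    · have e : d - a = q + t * n := by linear_combination hd
      rw [e, hshift]; exact hmq
    · have e : d - b = (d - c) + t * n := by linear_combination hc
      rw [e, hshift]; exact hmdc
  have hEaq : affT n a b (a + q) = a + q := by
    apply hfix
    · have e : a + q - a = q := by ring
      rw [e]; exact hmq
    · have e : a + q - b = d - c := by omega
      rw [e]; exact hmdc
  -- unpack hypoth@eses
  obtain ⟨⟨hua0, hub0, W1⟩, ⟨hc0, hd0, W2⟩⟩ := hdef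
  have hvc : (u ∘ affT n a b) c = u a + t * n := by
    simp only [Function.comp_apply, hEc]; exact hpt a
  have hvd : (u ∘ affT n a b) d = u (a + q) + t * n := by
    simp only [Function.comp_apply, hEd]
    rw [hd]; exact hpt (a + q)
  have hc0' : u a + t * n ≤ 0 := by rw [← hvc]; exact hc0
  have huc : u c = u b + t * n := by rw [hc]; exact hpt b
  have hudq : u (d - q) = u a + t * n := by
    have e : d - q = a + t * n := by linear_combination hd
    rw [e]; exact hpt a
  -- the two function identities
  have F1 : affT n (d - q) c = affT n a b := by
    have e1 : d - q = a + t * n := by linear_combination hd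
    rw [e1, hc]
    exact affT_shift n a b t
  have F2 : affT n c d = affT n b (a + q) := by
    rw [hc, hd]
    exact affT_shift n b (a + q) t
  refine ⟨⟨⟨?_, ?_, ?_⟩, ?_⟩, ?_⟩
  · -- u (d - q) ≤ 0
    rw [hudq]; exact hc0'
  · -- 0 < u c
    rw [huc]; linarith
  · -- window for (d - q, c)
    intro i h1 h2
    have hj1 : a < i - t * n := by
      have e1 : d - q = a + t * n := by linear_combination hd
      linarith [e1 ▸ h1]
    have hj2 : i - t * n < b := by linarith [hc]
    have hW := W1 (i - t * n) hj1 hj2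
    have hui : u i = u (i - t * n) + t * n := by
      have := hpt (i - t * n)
      simpa using this
    rw [hudq, huc]
    rcases hW with h | h
    · left; linarith
    · right; linarith
  · -- DefinedAt (u ∘ affT n (d - q) c) b (a + q)
    rw [F1]
    refine ⟨?_, ?_, ?_⟩
    · simp only [Function.comp_apply, hEb]; exact hua0
    · simp only [Function.comp_apply, hEaq]; exact huaq
    · intro i h1 h2
      have hj1 : c < i + t * n := by linarith [hc]
      have hj2 : i + t * n < d := by linarith [hd]
      have hW := W2 (i + t * n) hj1 hj2
      simp only [Function.comp_apply] at hW ⊢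
      rw [hv_mid' (i + t * n) hj1 hj2] at hW
      rw [hEc, hEd] at hW
      rw [hpt a] at hW
      have hd' : u d = u (a + q) + t * n := by rw [hd]; exact hpt (a + q)
      rw [hd'] at hW
      rw [hpt i] at hW
      rw [hv_mid i h1 h2, hEb, hEaq]
      rcases hW with h | h
      · left; linarith
      · right; linarith
  · -- equality of the composites
    rw [F1, ← F2]
end

section
/- Relation (X6): Let u be a 0-grassmannian affine permutation and let a < b < c < d be integers with b − a ≤ k and d − c ≤ k. Suppose b ≡ d (mod n), b − a < d − c, and u(a) ≤ 0. If the composite u·t_{a,b}·t_{c,d} is defined, then the composite u·t_{c, d−b+a}·t_{a,b} is defined and the two resulting affine permutations are equal. -/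
open Function

lemma not_dvd_aux {n x : ℤ} (hn : 0 < n) (hlo : -n < x) (hhi : x < n) (hx : x ≠ 0) :
    ¬ n ∣ x := by
  rintro ⟨t, rfl⟩
  rcases lt_trichotomy t 0 with h | h | h
  · nlinarith
  · simp [h] at hx
  · nlinarith

lemma dvd_of_eq' {n x y : ℤ} (h : n ∣ x) (e : y = x) : n ∣ y := e ▸ h

lemma affT_fix {n a b i : ℤ} (h1 : ¬ n ∣ (i - a)) (h2 : ¬ n ∣ (i - b)) :
    affT n a b i = i := by
  unfold affT
  rw [if_neg (fun h => h1 (Int.dvd_of_emod_eq_zero h)),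
      if_neg (fun h => h2 (Int.dvd_of_emod_eq_zero h))]

lemma affT_left {n a b i : ℤ} (h : n ∣ (i - a)) : affT n a b i = i - a + b := by
  unfold affT
  rw [if_pos (Int.emod_eq_zero_of_dvd h)]

lemma affT_right {n a b i : ℤ} (h1 : ¬ n ∣ (i - a)) (h2 : n ∣ (i - b)) :
    affT n a b i = i - b + a := by
  unfold affT
  rw [if_neg (fun h => h1 (Int.dvd_of_emod_eq_zero h)),
      if_pos (Int.emod_eq_zero_of_dvd h2)]

lemma uper {u : ℤ → ℤ} {n : ℤ} (h : ∀ i : ℤ, u (i + n) = u i + n) :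
    ∀ t i : ℤ, u (i + t * n) = u i + t * n := by
  intro t
  induction t using Int.induction_on with
  | zero => simp
  | succ t ih =>
    intro i
    have h1 := h (i + t * n)
    have h2 := ih i
    have e1 : i + (t + 1 : ℤ) * n = i + t * n + n := by ring
    rw [e1, h1, h2]; ring
  | pred t ih =>
    intro i
    have h1 := h (i + (-t - 1 : ℤ) * n)
    have e1 : i + (-t - 1 : ℤ) * n + n = i + (-t : ℤ) * n := by ring
    rw [e1] at h1
    have h2 := ih i
    show u (i + (-t - 1 : ℤ) * n) = u i + (-t - 1 : ℤ) * n
    linarith [h1, h2]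

theorem stmt17 (k : ℤ) (hk : 1 ≤ k) (u : ℤ → ℤ)
    (hu : IsAffinePerm (k + 1) u) (hg : IsGrassmannian (k + 1) u)
    (a b c d : ℤ) (hab : a < b) (hbc : b < c) (hcd : c < d)
    (hba : b - a ≤ k) (hdc : d - c ≤ k)
    (hmod : b % (k + 1) = d % (k + 1))
    (hlen : b - a < d - c)
    (hua : u a ≤ 0)
    (hdef : Def2 (k + 1) u a b c d) :
    Def2 (k + 1) u c (d - b + a) a b ∧
      (u ∘ affT (k + 1) a b) ∘ affT (k + 1) c d =
        (u ∘ affT (k + 1) c (d - b + a)) ∘ affT (k + 1) a b := by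
  obtain ⟨⟨h1a, h1b, hw1⟩, ⟨h2c, h2d, hw2⟩⟩ := hdef
  obtain ⟨-, hper0, -⟩ := hu
  set n := k + 1 with hns
  have hn : (0 : ℤ) < n := by omega
  have hp := uper hper0
  -- n divides d - b
  have hdb : n ∣ (d - b) := by
    have h0 : (d - b) % n = 0 := by
      have := Int.emod_eq_emod_iff_emod_sub_eq_zero.mp hmod.symm
      exact this
    exact Int.dvd_of_emod_eq_zero h0
  obtain ⟨m, hm⟩ := hdb
  have hdb : n ∣ (d - b) := ⟨m, hm⟩
  have hm1 : 1 ≤ m := by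
    by_contra h'
    have h2 : n * m ≤ n * 0 := mul_le_mul_of_nonneg_left (by omega) hn.le
    simp at h2
    linarith
  have hnm : 0 < n * m := mul_pos hn (by omega)
  -- residue distinctness
  have nba : ¬ n ∣ (b - a) := not_dvd_aux hn (by omega) (by omega) (by omega)
  have ndc : ¬ n ∣ (d - c) := not_dvd_aux hn (by omega) (by omega) (by omega)
  have nca : ¬ n ∣ (c - a) := by
    intro h
    have hx : n ∣ (d - b - (c - a)) := hdb.sub h
    exact not_dvd_aux hn (by omega) (by omega) (by omega) hx
  have ncb : ¬ n ∣ (c - b) := by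
    intro h
    have hx : n ∣ (d - c) := dvd_of_eq' (hdb.sub h) (by ring)
    exact ndc hx
  -- key point evaluations
  have Tab_c : affT n a b c = c := affT_fix nca ncb
  have Tab_d : affT n a b d = d - b + a := by
    refine affT_right ?_ hdb
    intro h
    exact nba (dvd_of_eq' (h.sub hdb) (by ring))
  have huc : u c ≤ 0 := by
    simp only [Function.comp_apply] at h2c
    rwa [Tab_c] at h2c
  have hue : 0 < u (d - b + a) := by
    simp only [Function.comp_apply] at h2d
    rwa [Tab_d] at h2d
  have hue2 : u (d - b + a) = u a + n * m := by
    have e1 : d - b + a = a + m * n := by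
      have : n * m = m * n := by ring
      linarith
    rw [e1, hp m a]; ring
  have nac : ¬ n ∣ (a - c) := fun h => nca (dvd_of_eq' (dvd_neg.mpr h) (by ring))
  have hae : n ∣ (a - (d - b + a)) := dvd_of_eq' (dvd_neg.mpr hdb) (by ring)
  have Tce_a : affT n c (d - b + a) a = a - (d - b + a) + c := affT_right nac hae
  have val_a : u (a - (d - b + a) + c) = u c - n * m := by
    have e1 : a - (d - b + a) + c = c + (-m) * n := by
      have : (-m) * n = -(n * m) := by ring
      linarith
    rw [e1, hp (-m) c]; ring
  have nbc : ¬ n ∣ (b - c) := fun h => ncb (dvd_of_eq' (dvd_neg.mpr h) (by ring))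
  have nbe : ¬ n ∣ (b - (d - b + a)) := by
    intro h
    exact nba (dvd_of_eq' (h.add hdb) (by ring))
  have Tce_b : affT n c (d - b + a) b = b := affT_fix nbc nbe
  refine ⟨⟨⟨huc, hue, ?_⟩, ?_, ?_, ?_⟩, ?_⟩
  · -- window for DefinedAt u c (d - b + a)
    intro i hci hie
    have hia : ¬ n ∣ (i - a) := by
      intro h
      have hx : n ∣ (i - (d - b + a)) := dvd_of_eq' (h.sub hdb) (by ring)
      exact not_dvd_aux hn (by omega) (by omega) (by omega) hx
    have hib : ¬ n ∣ (i - b) := by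
      intro h
      have hx : n ∣ (i - d) := dvd_of_eq' (h.sub hdb) (by ring)
      exact not_dvd_aux hn (by omega) (by omega) (by omega) hx
    have hTi : affT n a b i = i := affT_fix hia hib
    have h := hw2 i hci (by omega)
    simp only [Function.comp_apply] at h
    rwa [Tab_c, Tab_d, hTi] at h
  · -- (u ∘ T_ce) a ≤ 0
    simp only [Function.comp_apply]
    rw [Tce_a, val_a]
    linarith
  · -- 0 < (u ∘ T_ce) b
    simp only [Function.comp_apply]
    rw [Tce_b]
    exact h1b
  · -- window for DefinedAt (u ∘ T_ce) a b
    intro i hai hib'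
    have nie : ¬ n ∣ (i - (d - b + a)) := by
      intro h
      have hx : n ∣ (i - a) := dvd_of_eq' (h.add hdb) (by ring)
      exact not_dvd_aux hn (by omega) (by omega) (by omega) hx
    -- facts about j := i + n*m
    have hjc : c < i + n * m := by linarith
    have hjd : i + n * m < d := by linarith
    have hja : ¬ n ∣ (i + n * m - a) := by
      intro h
      have hx : n ∣ (i - a) := dvd_of_eq' (h.sub ⟨m, rfl⟩) (by ring)
      exact not_dvd_aux hn (by omega) (by omega) (by omega) hx
    have hjb : ¬ n ∣ (i + n * m - b) := by
      intro h
      have hx : n ∣ (i - b) := dvd_of_eq' (h.sub ⟨m, rfl⟩) (by ring)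
      exact not_dvd_aux hn (by omega) (by omega) (by omega) hx
    have hTj : affT n a b (i + n * m) = i + n * m := affT_fix hja hjb
    have hji : u (i + n * m) = u i + n * m := by
      have e1 : i + n * m = i + m * n := by ring
      rw [e1, hp m i]; ring
    have hwj := hw2 (i + n * m) hjc hjd
    simp only [Function.comp_apply] at hwj
    rw [Tab_c, Tab_d, hTj] at hwj
    by_cases hic : n ∣ (i - c)
    · exfalso
      obtain ⟨t, ht⟩ := hic
      have htneg : t ≤ -1 := by
        by_contra h'
        have h2 : n * 0 ≤ n * t := mul_le_mul_of_nonneg_left (by omega) hn.le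
        simp at h2
        linarith
      have htm : -m + 1 ≤ t := by
        by_contra h'
        have h2 : n * t ≤ n * (-m) := mul_le_mul_of_nonneg_left (by omega) hn.le
        have h3 : n * (-m) = -(n * m) := by ring
        linarith
      have hvi : u i = u c + t * n := by
        have e6 : i = c + t * n := by
          have : n * t = t * n := by ring
          linarith
        rw [e6, hp t c]
      have htn : t * n ≤ -n := by
        have h2 : n * t ≤ n * (-1) := mul_le_mul_of_nonneg_left htneg hn.le
        have h3 : n * t = t * n := by ring
        linarith
      have hw1i := hw1 i hai hib'
      have hui_lt : u i < u a := by
        rcases hw1i with h' | h'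
        · exact h'
        · exfalso; linarith
      rcases hwj with h | h
      · have h4 : n * 1 ≤ n * (t + m) := mul_le_mul_of_nonneg_left (by omega) hn.le
        have e7 : n * (t + m) = t * n + n * m := by ring
        linarith
      · linarith
    · -- i not congruent to c : transposition fixes i
      have hTi : affT n c (d - b + a) i = i := affT_fix hic nie
      rcases hw1 i hai hib' with h' | h'
      · left
        simp only [Function.comp_apply]
        rw [hTi, Tce_a, val_a]
        rcases hwj with h | h
        · linarith
        · exfalso; linarith
      · right
        simp only [Function.comp_apply]
        rw [hTi, Tce_b]
        exact h'
  · -- the two composites are equal as functions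
    funext i
    simp only [Function.comp_apply]
    congr 1
    by_cases ha : n ∣ (i - a)
    · have h1 : ¬ n ∣ (i - c) := fun hh => nca (dvd_of_eq' (ha.sub hh) (by ring))
      have h2 : ¬ n ∣ (i - d) := by
        intro hh
        have hx : n ∣ (i - b) := dvd_of_eq' (hh.add hdb) (by ring)
        exact nba (dvd_of_eq' (ha.sub hx) (by ring))
      have h3 : ¬ n ∣ (i - a + b - c) := by
        intro hh
        exact ncb (dvd_of_eq' (dvd_neg.mpr (hh.sub ha)) (by ring))
      have h4 : ¬ n ∣ (i - a + b - (d - b + a)) := by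
        intro hh
        exact nba (dvd_of_eq' ((hh.add hdb).sub ha) (by ring))
      rw [affT_fix h1 h2, affT_left ha, affT_fix h3 h4]
    · by_cases hb : n ∣ (i - b)
      · have hd' : n ∣ (i - d) := dvd_of_eq' (hb.sub hdb) (by ring)
        have hc1 : ¬ n ∣ (i - c) := fun hh => ncb (dvd_of_eq' (hb.sub hh) (by ring))
        have hA : ¬ n ∣ (i - d + c - a) := fun hh => nca (dvd_of_eq' (hh.sub hd') (by ring))
        have hB : ¬ n ∣ (i - d + c - b) := fun hh => ncb (dvd_of_eq' (hh.sub hd') (by ring))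
        have hC : ¬ n ∣ (i - b + a - c) :=
          fun hh => nca (dvd_of_eq' (dvd_neg.mpr (hh.sub hb)) (by ring))
        have hD : n ∣ (i - b + a - (d - b + a)) := dvd_of_eq' (hb.sub hdb) (by ring)
        rw [affT_right hc1 hd', affT_fix hA hB, affT_right ha hb, affT_right hC hD]
        ring
      · by_cases hc : n ∣ (i - c)
        · have hA : ¬ n ∣ (i - c + d - a) := by
            intro hh
            exact nba (dvd_of_eq' ((hh.sub hc).sub hdb) (by ring))
          have hB : n ∣ (i - c + d - b) := dvd_of_eq' (hc.add hdb) (by ring)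
          rw [affT_left hc, affT_right hA hB, affT_fix ha hb, affT_left hc]
          ring
        · have hd2 : ¬ n ∣ (i - d) := fun hh => hb (dvd_of_eq' (hh.add hdb) (by ring))
          have he2 : ¬ n ∣ (i - (d - b + a)) := fun hh => ha (dvd_of_eq' (hh.add hdb) (by ring))
          rw [affT_fix hc hd2, affT_fix ha hb, affT_fix hc he2]
end
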